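/- For all integers p, all integers q ≥ 1, and all integers n ≥ 1, the generalized hyperharmonic numbers satisfy the reduction relation (q − 1)·H_n^{(p,q)} = (n + q − 1)·H_n^{(p,q−1)} − H_n^{(p−1,q−1)}. -/

import Mathlib

open Finset Real

/-- The generalized harmonic number `H_n^{(p)} = ∑_{k=1}^n 1/k^p`. -/
noncomputable def gH (p : ℤ) (n : ℕ) : ℝ := ∑ k ∈ Finset.Icc 1 n, ((k : ℝ) ^ p)⁻¹

/-- The generalized hyperharmonic number `H_n^{(p,q)}`:
`H_n^{(p,0)} = 1/n^p` (with `H_0^{(p,q)} = 0`) and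
`H_n^{(p,q)} = ∑_{k=1}^n H_k^{(p,q-1)}` for `q ≥ 1`. -/
noncomputable def gHH (p : ℤ) : ℕ → ℕ → ℝ
  | 0, n => if n = 0 then 0 else ((n : ℝ) ^ p)⁻¹
  | q + 1, n => ∑ k ∈ Finset.Icc 1 n, gHH p q k

/-- Euler sum of generalized harmonic numbers `ζ_{H^{(p)}}(r) = ∑_{n≥1} H_n^{(p)}/n^r`. -/
noncomputable def eulerSum (p r : ℤ) : ℝ := ∑' n : ℕ+, gH p n / (n : ℝ) ^ r

/-- Euler sum of generalized hyperharmonic numbers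
`ζ_{H^{(p,q)}}(r) = ∑_{n≥1} H_n^{(p,q)}/n^r`. -/
noncomputable def eulerSumHH (p : ℤ) (q : ℕ) (r : ℤ) : ℝ := ∑' n : ℕ+, gHH p q n / (n : ℝ) ^ r

/-- Riemann zeta value at an integer argument, `ζ(s) = ∑_{n≥1} 1/n^s`. -/
noncomputable def zv (s : ℤ) : ℝ := ∑' n : ℕ+, ((n : ℝ) ^ s)⁻¹

/-- Unsigned Stirling numbers of the first kind, defined by
`x(x+1)⋯(x+q-1) = ∑_{k=0}^q [q,k] x^k`, i.e. `[n+1,k] = [n,k-1] + n·[n,k]`. -/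
def stirlingFirst : ℕ → ℕ → ℕ
  | 0, 0 => 1
  | 0, _ + 1 => 0
  | _ + 1, 0 => 0
  | n + 1, k + 1 => stirlingFirst n k + n * stirlingFirst n (k + 1)

/-- The series `μ(r,j) = ∑_{n≥1} 1/(n^r (n+j))`. -/
noncomputable def mu (r j : ℕ) : ℝ := ∑' n : ℕ+, 1 / ((n : ℝ) ^ r * ((n : ℝ) + j))

/-- `e_j(n+1, n+2, …, n+q)`: the `j`-th elementary symmetric polynomial
evaluated at the numbers `n+1, …, n+q`. -/
noncomputable def esymmVal (n q j : ℕ) : ℝ :=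
  ∑ s ∈ Finset.powersetCard j (Finset.Icc 1 q), ∏ i ∈ s, ((n : ℝ) + i)


lemma gHH_succ_top (p : ℤ) (q n : ℕ) :
    gHH p (q + 1) (n + 1) = gHH p (q + 1) n + gHH p q (n + 1) := by
  show (∑ k ∈ Finset.Icc 1 (n + 1), gHH p q k) = _
  rw [Finset.sum_Icc_succ_top (Nat.le_add_left 1 n)]
  rfl

lemma gHH_aux (p : ℤ) : ∀ q n : ℕ,
    (q : ℝ) * gHH p (q + 1) n = ((n : ℝ) + q) * gHH p q n - gHH (p - 1) q n := by
  intro q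
  induction q with
  | zero =>
    intro n
    rcases Nat.eq_zero_or_pos n with h | h
    · subst h; simp [gHH]
    · have hn : (n : ℝ) ≠ 0 := by positivity
      simp only [gHH, Nat.pos_iff_ne_zero.mp h, if_false, Nat.cast_zero]
      rw [zpow_sub₀ hn, zpow_one]
      field_simp
      ring
  | succ q ih =>
    intro n
    induction n with
    | zero => simp [gHH]
    | succ n ihn =>
      have h1 := ih (n + 1)
      rw [gHH_succ_top] at h1
      rw [gHH_succ_top p (q + 1) n, gHH_succ_top p q n, gHH_succ_top (p - 1) q n]
      push_cast at *
      linear_combination ihn + h1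

/-- Reduction relation:
`(q-1)*H_n^{(p,q)} = (n+q-1)*H_n^{(p,q-1)} - H_n^{(p-1,q-1)}` for `q >= 1`, `n >= 1`. -/
theorem stmt_0 (p : ℤ) (q n : ℕ) (hq : 1 ≤ q) (hn : 1 ≤ n) :
    ((q : ℝ) - 1) * gHH p q n
      = ((n : ℝ) + (q : ℝ) - 1) * gHH p (q - 1) n - gHH (p - 1) (q - 1) n := by
  obtain ⟨m, rfl⟩ : ∃ m, q = m + 1 := ⟨q - 1, (Nat.succ_pred_eq_of_pos hq).symm⟩
  simp only [Nat.add_sub_cancel]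
  push_cast
  linear_combination gHH_aux p m n
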